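/- Let g ∈ C²([−1,1]) and consider the uniform mesh z₀ = −1 < z₁ < ⋯ < z_m = 1 with spacing h = 2/m. Then the piecewise-linear interpolant I_h g of g at the nodes zᵢ admits the representation I_h g(z) = g(z₀) + g′(ξ₀) σ(z − z₀) + Σᵢ₌₁^{m−1} g″(ξᵢ) h σ(z − zᵢ) for some points ξ₀ ∈ [z₀, z₁] and ξᵢ ∈ [z_{i−1}, z_{i+1}], where σ(x) = max(x,0). -/

import Mathlib

open Set

/-- Second-difference mean value: via Cauchy MVT. -/
lemma secondDiff_aux (g g' g'' : ℝ → ℝ) (c h : ℝ) (hh : 0 < h)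
    (hg' : ∀ x ∈ Icc (c - h) (c + h), HasDerivAt g (g' x) x)
    (hg'' : ∀ x ∈ Icc (c - h) (c + h), HasDerivAt g' (g'' x) x) :
    ∃ ξ ∈ Ioo (c - h) (c + h), g (c + h) - 2 * g c + g (c - h) = g'' ξ * h ^ 2 := by
  set F : ℝ → ℝ := fun t => g (c + t) + g (c - t) with hF
  set F' : ℝ → ℝ := fun t => g' (c + t) - g' (c - t) with hF'
  have hmem : ∀ t ∈ Icc (0 : ℝ) h, c + t ∈ Icc (c - h) (c + h) ∧ c - t ∈ Icc (c - h) (c + h) := by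
    intro t ht
    constructor <;> constructor <;> linarith [ht.1, ht.2]
  have hFd : ∀ t ∈ Ioo (0 : ℝ) h, HasDerivAt F (F' t) t := by
    intro t ht
    have ht' : t ∈ Icc (0 : ℝ) h := ⟨le_of_lt ht.1, le_of_lt ht.2⟩
    have h1 := (hg' (c + t) (hmem t ht').1).comp t ((hasDerivAt_id t).const_add c)
    have h2 := (hg' (c - t) (hmem t ht').2).comp t ((hasDerivAt_id t).const_sub c)
    simp only [mul_one] at h1
    have h2' : HasDerivAt (fun t => g (c - t)) (-(g' (c - t))) t := by
      exact h2.congr_deriv (by ring)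
    have := h1.add h2'
    refine this.congr_deriv ?_
    simp only [hF']; ring
  have hFc : ContinuousOn F (Icc 0 h) := by
    intro t ht
    exact (((hg' _ (hmem t ht).1).continuousAt.comp (by fun_prop)).add
      ((hg' _ (hmem t ht).2).continuousAt.comp (by fun_prop))).continuousWithinAt
  have hq : ∀ t ∈ Ioo (0:ℝ) h, HasDerivAt (fun t : ℝ => t ^ 2) (2 * t) t := by
    intro t _
    simpa using hasDerivAt_pow 2 t
  obtain ⟨t₀, ht₀, hcauchy⟩ := exists_ratio_hasDerivAt_eq_ratio_slope F F' hh hFc hFd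
    (fun t : ℝ => t ^ 2) (fun t => 2 * t) (by fun_prop) hq
  -- MVT for g' on [c - t₀, c + t₀]
  have hsub : Icc (c - t₀) (c + t₀) ⊆ Icc (c - h) (c + h) := by
    apply Icc_subset_Icc <;> linarith [ht₀.1, ht₀.2]
  have hlt : c - t₀ < c + t₀ := by linarith [ht₀.1]
  obtain ⟨ξ, hξ, hξeq⟩ := exists_hasDerivAt_eq_slope g' g'' hlt
    (fun x hx => (hg'' x (hsub hx)).continuousAt.continuousWithinAt)
    (fun x hx => hg'' x (hsub (Ioo_subset_Icc_self hx)))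
  refine ⟨ξ, ?_, ?_⟩
  · exact ⟨by linarith [hξ.1, ht₀.1, ht₀.2], by linarith [hξ.2, ht₀.1, ht₀.2]⟩
  · have h2t : (c + t₀) - (c - t₀) = 2 * t₀ := by ring
    rw [h2t] at hξeq
    have ht₀ne : (2 : ℝ) * t₀ ≠ 0 := ne_of_gt (by linarith [ht₀.1])
    have hFh : F h - F 0 = g (c + h) - 2 * g c + g (c - h) := by simp [hF]; ring
    have : g' (c + t₀) - g' (c - t₀) = g'' ξ * (2 * t₀) := by
      rw [eq_div_iff ht₀ne] at hξeq; linarith [hξeq]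
    simp only [hF'] at hcauchy
    rw [this] at hcauchy
    rw [← hFh]
    have : (h ^ 2 - 0 ^ 2) * (g'' ξ * (2 * t₀)) = (F h - F 0) * (2 * t₀) := hcauchy
    have h2 : (F h - F 0) * (2 * t₀) = g'' ξ * h ^ 2 * (2 * t₀) := by rw [← this]; ring
    exact mul_right_cancel₀ ht₀ne h2

lemma key_sum (G : ℕ → ℝ) (h : ℝ) (hh : h ≠ 0) (z : ℕ → ℝ) (hz : ∀ i, z (i + 1) = z i + h) :
    ∀ j, ∀ x : ℝ, G 0 + (G 1 - G 0) * ((x - z 0) / h)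
      + ∑ i ∈ Finset.Icc 1 j, (G (i + 1) - 2 * G i + G (i - 1)) * ((x - z i) / h)
    = G j * ((z (j + 1) - x) / h) + G (j + 1) * ((x - z j) / h) := by
  intro j
  induction j with
  | zero =>
    intro x
    simp only [Finset.Icc_eq_empty (by norm_num : ¬ (1:ℕ) ≤ 0), Finset.sum_empty, hz 0]
    field_simp
    ring
  | succ j ih =>
    intro x
    rw [Finset.sum_Icc_succ_top (by omega : 1 ≤ j + 1), ← add_assoc, ih x]
    simp only [Nat.add_sub_cancel, hz (j + 1), hz j]
    field_simp
    ring

theorem interpolant_relu_representation (m : ℕ) (hm : 1 ≤ m)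
    (g g' g'' : ℝ → ℝ)
    (hg' : ∀ x ∈ Set.Icc (-1 : ℝ) 1, HasDerivAt g (g' x) x)
    (hg'' : ∀ x ∈ Set.Icc (-1 : ℝ) 1, HasDerivAt g' (g'' x) x)
    (hg''cont : ContinuousOn g'' (Set.Icc (-1 : ℝ) 1))
    (Ihg : ℝ → ℝ)
    (hinterp : ∀ i ≤ m, Ihg (-1 + (i : ℝ) * (2 / (m : ℝ))) = g (-1 + (i : ℝ) * (2 / (m : ℝ))))
    (hlin : ∀ i < m, ∀ x ∈ Set.Icc (-1 + (i : ℝ) * (2 / (m : ℝ)))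
        (-1 + ((i : ℝ) + 1) * (2 / (m : ℝ))),
      Ihg x = g (-1 + (i : ℝ) * (2 / (m : ℝ))) *
          ((-1 + ((i : ℝ) + 1) * (2 / (m : ℝ)) - x) / (2 / (m : ℝ))) +
        g (-1 + ((i : ℝ) + 1) * (2 / (m : ℝ))) *
          ((x - (-1 + (i : ℝ) * (2 / (m : ℝ)))) / (2 / (m : ℝ)))) :
    ∃ ξ : ℕ → ℝ,
      ξ 0 ∈ Set.Icc (-1 : ℝ) (-1 + 2 / (m : ℝ)) ∧
      (∀ i, 1 ≤ i → i ≤ m - 1 →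
        ξ i ∈ Set.Icc (-1 + ((i : ℝ) - 1) * (2 / (m : ℝ))) (-1 + ((i : ℝ) + 1) * (2 / (m : ℝ)))) ∧
      ∀ x ∈ Set.Icc (-1 : ℝ) 1,
        Ihg x = g (-1) + g' (ξ 0) * max (x - (-1)) 0 +
          ∑ i ∈ Finset.Icc 1 (m - 1),
            g'' (ξ i) * (2 / (m : ℝ)) * max (x - (-1 + (i : ℝ) * (2 / (m : ℝ)))) 0 := by
  have hm0 : (0 : ℝ) < (m : ℝ) := by exact_mod_cast Nat.pos_of_ne_zero (by omega)
  set h : ℝ := 2 / (m : ℝ) with hdefh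
  have hh : 0 < h := by positivity
  have hhm : (m : ℝ) * h = 2 := by rw [hdefh]; field_simp
  set z : ℕ → ℝ := fun i => -1 + (i : ℝ) * h with hdefz
  have hz : ∀ i, z (i + 1) = z i + h := by
    intro i; simp only [hdefz]; push_cast; ring
  have hz0 : z 0 = -1 := by simp [hdefz]
  have hzm : z m = 1 := by
    simp only [hdefz]; rw [hhm]; ring
  have hmono : ∀ ⦃i k : ℕ⦄, i ≤ k → z i ≤ z k := by
    intro i k hik
    have : (i : ℝ) ≤ (k : ℝ) := by exact_mod_cast hik
    simp only [hdefz]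
    nlinarith
  have hzIcc : ∀ i ≤ m, z i ∈ Set.Icc (-1 : ℝ) 1 := by
    intro i hi
    exact ⟨hz0 ▸ hmono (Nat.zero_le i), hzm ▸ hmono hi⟩
  -- ξ₀ from MVT on [z 0, z 1]
  have hz01 : z 0 < z 1 := by rw [hz 0]; linarith
  have hsub01 : Set.Icc (z 0) (z 1) ⊆ Set.Icc (-1 : ℝ) 1 :=
    Set.Icc_subset_Icc (le_of_eq hz0.symm) ((hzIcc 1 hm).2)
  obtain ⟨ξ₀, hξ₀mem, hξ₀⟩ := exists_hasDerivAt_eq_slope g g' hz01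
    (fun x hx => (hg' x (hsub01 hx)).continuousAt.continuousWithinAt)
    (fun x hx => hg' x (hsub01 (Set.Ioo_subset_Icc_self hx)))
  -- ξᵢ from second-difference MVT
  have hξi : ∀ i, 1 ≤ i → i ≤ m - 1 →
      ∃ ξ ∈ Set.Ioo (z i - h) (z i + h),
        g (z i + h) - 2 * g (z i) + g (z i - h) = g'' ξ * h ^ 2 := by
    intro i h1 h2
    have hip1 : i + 1 ≤ m := by omega
    have hl : -1 ≤ z i - h := by
      have := (hzIcc (i - 1) (by omega)).1
      have : z (i - 1) = z i - h := by
        have := hz (i - 1); rw [Nat.sub_add_cancel h1] at this; linarith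
      linarith [(hzIcc (i - 1) (by omega)).1, this]
    have hr : z i + h ≤ 1 := by
      have h1' := hz i
      have := (hzIcc (i + 1) hip1).2
      linarith
    have hsub : Set.Icc (z i - h) (z i + h) ⊆ Set.Icc (-1 : ℝ) 1 :=
      Set.Icc_subset_Icc hl hr
    exact secondDiff_aux g g' g'' (z i) h hh (fun x hx => hg' x (hsub hx))
      (fun x hx => hg'' x (hsub hx))
  classical
  refine ⟨fun i => if hi : 1 ≤ i ∧ i ≤ m - 1 then (hξi i hi.1 hi.2).choose else ξ₀, ?_, ?_, ?_⟩
  · beta_reduce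
    rw [dif_neg (fun hc => absurd hc.1 (by omega))]
    exact ⟨le_of_lt (hz0 ▸ hξ₀mem.1), le_of_lt (by simpa [hdefz] using hξ₀mem.2)⟩
  · intro i h1 h2
    beta_reduce
    rw [dif_pos ⟨h1, h2⟩]
    obtain ⟨hmem, -⟩ := (hξi i h1 h2).choose_spec
    constructor
    · have : -1 + ((i : ℝ) - 1) * h = z i - h := by simp only [hdefz]; ring
      rw [this]; exact le_of_lt hmem.1
    · have : -1 + ((i : ℝ) + 1) * h = z i + h := by simp only [hdefz]; ring
      rw [this]; exact le_of_lt hmem.2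
  · intro x hx
    -- find the subinterval index j
    set t : ℝ := (x + 1) / h with hdeft
    have ht0 : 0 ≤ t := by
      apply div_nonneg _ (le_of_lt hh); linarith [hx.1]
    have htm : t ≤ (m : ℝ) := by
      rw [hdeft, div_le_iff₀ hh]; nlinarith [hx.2]
    set j : ℕ := min ⌊t⌋₊ (m - 1) with hdefj
    have hjm1 : j ≤ m - 1 := min_le_right _ _
    have hjm : j < m := by omega
    have hjt : (j : ℝ) ≤ t := by
      rcases min_cases ⌊t⌋₊ (m - 1) with ⟨he, _⟩ | ⟨he, hge⟩
      · rw [hdefj, he]; exact Nat.floor_le ht0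
      · rw [hdefj, he]
        have : ((m : ℝ) - 1) ≤ ⌊t⌋₊ := by
          have : (m - 1 : ℕ) ≤ ⌊t⌋₊ := le_of_lt hge
          push_cast [Nat.cast_sub hm]
          exact_mod_cast Nat.cast_le.mpr this
        calc ((m - 1 : ℕ) : ℝ) = (m : ℝ) - 1 := by push_cast [Nat.cast_sub hm]; ring
          _ ≤ ⌊t⌋₊ := this
          _ ≤ t := Nat.floor_le ht0
    have hjt1 : t ≤ (j : ℝ) + 1 := by
      rcases min_cases ⌊t⌋₊ (m - 1) with ⟨he, _⟩ | ⟨he, hge⟩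
      · rw [hdefj, he]; exact le_of_lt (Nat.lt_floor_add_one t)
      · rw [hdefj, he]
        have : ((m - 1 : ℕ) : ℝ) + 1 = (m : ℝ) := by push_cast [Nat.cast_sub hm]; ring
        rw [this]; exact htm
    have hxl : z j ≤ x := by
      have : (j : ℝ) * h ≤ t * h := mul_le_mul_of_nonneg_right hjt (le_of_lt hh)
      have hth : t * h = x + 1 := by rw [hdeft]; field_simp
      simp only [hdefz]; linarith
    have hxr : x ≤ z (j + 1) := by
      have : t * h ≤ ((j : ℝ) + 1) * h := mul_le_mul_of_nonneg_right hjt1 (le_of_lt hh)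
      have hth : t * h = x + 1 := by rw [hdeft]; field_simp
      simp only [hdefz]; push_cast; linarith
    -- value of Ihg on [z j, z (j+1)]
    have hxr' : x ≤ -1 + ((j : ℝ) + 1) * h := by
      have h0 := hxr; simp only [hdefz] at h0; push_cast at h0; linarith
    have hIhg : Ihg x = g (z j) * ((z (j + 1) - x) / h) + g (z (j + 1)) * ((x - z j) / h) := by
      rw [hlin j hjm x ⟨hxl, hxr'⟩]
      simp only [hdefz]
      push_cast
      ring
    rw [hIhg]
    -- set G
    set G : ℕ → ℝ := fun i => g (z i) with hdefG
    -- transform the RHS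
    have hmax0 : max (x - (-1)) 0 = x - z 0 := by
      rw [hz0, max_eq_left (by linarith [hx.1])]
    have hterm0 : g' ξ₀ * max (x - (-1)) 0 = (G 1 - G 0) * ((x - z 0) / h) := by
      rw [hmax0, hξ₀]
      have : z 1 - z 0 = h := by rw [hz 0]; ring
      rw [this]
      ring
    -- split the sum
    have hsplit : Finset.Icc 1 (m - 1) = Finset.Icc 1 j ∪ Finset.Ioc j (m - 1) := by
      ext k; simp only [Finset.mem_Icc, Finset.mem_union, Finset.mem_Ioc]; omega
    have hdisj : Disjoint (Finset.Icc 1 j) (Finset.Ioc j (m - 1)) := by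
      rw [Finset.disjoint_left]; intro k hk1 hk2
      simp only [Finset.mem_Icc] at hk1; simp only [Finset.mem_Ioc] at hk2; omega
    rw [hsplit, Finset.sum_union hdisj]
    have hsum2 : ∑ i ∈ Finset.Ioc j (m - 1),
        g'' ((fun i => if hi : 1 ≤ i ∧ i ≤ m - 1 then (hξi i hi.1 hi.2).choose else ξ₀) i) * h *
          max (x - (-1 + (i : ℝ) * h)) 0 = 0 := by
      apply Finset.sum_eq_zero
      intro i hi
      simp only [Finset.mem_Ioc] at hi
      have hzi : x ≤ -1 + (i : ℝ) * h := by
        have h1 : z (j + 1) ≤ z i := hmono (by omega)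
        simpa [hdefz] using le_trans hxr h1
      rw [max_eq_right (by linarith), mul_zero]
    have hsum1 : ∑ i ∈ Finset.Icc 1 j,
        g'' ((fun i => if hi : 1 ≤ i ∧ i ≤ m - 1 then (hξi i hi.1 hi.2).choose else ξ₀) i) * h *
          max (x - (-1 + (i : ℝ) * h)) 0
        = ∑ i ∈ Finset.Icc 1 j, (G (i + 1) - 2 * G i + G (i - 1)) * ((x - z i) / h) := by
      apply Finset.sum_congr rfl
      intro i hi
      simp only [Finset.mem_Icc] at hi
      have hcond : 1 ≤ i ∧ i ≤ m - 1 := ⟨hi.1, le_trans hi.2 hjm1⟩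
      beta_reduce
      rw [dif_pos hcond]
      obtain ⟨-, heq⟩ := (hξi i hcond.1 hcond.2).choose_spec
      have hxi : -1 + (i : ℝ) * h ≤ x := by
        have := hmono hi.2
        simpa [hdefz] using le_trans this hxl
      rw [max_eq_left (by linarith)]
      have hzp : z (i + 1) = z i + h := hz i
      have hzm' : z (i - 1) = z i - h := by
        have := hz (i - 1); rw [Nat.sub_add_cancel hcond.1] at this; linarith
      have hGi : G (i + 1) - 2 * G i + G (i - 1) = g'' ((hξi i hcond.1 hcond.2).choose) * h ^ 2 := by
        simp only [hdefG, hzp, hzm']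
        exact heq
      rw [hGi]
      have : (x - z i) = (x - (-1 + (i : ℝ) * h)) := by simp [hdefz]
      rw [this]
      field_simp
    have hΞ0 : (fun i => if hi : 1 ≤ i ∧ i ≤ m - 1 then (hξi i hi.1 hi.2).choose else ξ₀) 0 = ξ₀ := by
      beta_reduce
      rw [dif_neg (fun hc => absurd hc.1 (by omega))]
    rw [hsum1, hsum2, add_zero, hΞ0, hterm0]
    have hkey := key_sum G h (ne_of_gt hh) z hz j x
    have hG0 : G 0 = g (-1) := by simp [hdefG, hz0]
    rw [← hG0]
    exact hkey.symm
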